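/- For any two projection operators f and g on a complex Hilbert space, ‖f∘g‖ − ‖f∘g‖² ≤ ‖f∘g − g∘f‖. -/

import Mathlib

open ContinuousLinearMap

lemma proj_norm_le_one
    {H : Type*} [NormedAddCommGroup H] [InnerProductSpace ℂ H] [CompleteSpace H]
    (p : H →L[ℂ] H) (hp : p ∘L p = p) (hp' : adjoint p = p) : ‖p‖ ≤ 1 := by
  refine opNorm_le_bound p zero_le_one fun x => ?_
  rw [one_mul]
  have h1 : (inner ℂ (p x) (p x) : ℂ) = inner ℂ (p x) x := by
    calc (inner ℂ (p x) (p x) : ℂ) = inner ℂ (adjoint p (p x)) x := by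
          rw [adjoint_inner_left]
      _ = inner ℂ (p x) x := by
          rw [hp']
          congr 1
          have := congrArg (fun T => T x) hp
          simpa using this
  have h2 : (‖p x‖ : ℝ) ^ 2 = RCLike.re (inner ℂ (p x) (p x) : ℂ) := by
    rw [inner_self_eq_norm_sq]
  have h3 : ‖p x‖ ^ 2 ≤ ‖p x‖ * ‖x‖ := by
    rw [h2, h1]
    calc RCLike.re (inner ℂ (p x) x : ℂ) ≤ ‖(inner ℂ (p x) x : ℂ)‖ :=
          RCLike.re_le_norm _
      _ ≤ ‖p x‖ * ‖x‖ := norm_inner_le_norm _ _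
  rcases eq_or_lt_of_le (norm_nonneg (p x)) with h | h
  · rw [← h]; exact norm_nonneg x
  · nlinarith

theorem commutator_norm_lower_bound
    {H : Type*} [NormedAddCommGroup H] [InnerProductSpace ℂ H] [CompleteSpace H]
    (f g : H →L[ℂ] H)
    (hf : f ∘L f = f) (hf' : adjoint f = f)
    (hg : g ∘L g = g) (hg' : adjoint g = g) :
    ‖f ∘L g‖ - ‖f ∘L g‖ ^ 2 ≤ ‖f ∘L g - g ∘L f‖ := by
  have hfn := proj_norm_le_one f hf hf'
  have hgn := proj_norm_le_one g hg hg'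
  set c := f ∘L g - g ∘L f with hc
  have key : f ∘L c ∘L g = f ∘L g - (f ∘L g) ∘L (f ∘L g) := by
    simp only [hc, comp_sub, sub_comp, comp_assoc]
    rw [show f ∘L (f ∘L g ∘L g) = f ∘L g by rw [hg, ← comp_assoc, hf],
        show f ∘L (g ∘L f ∘L g) = (f ∘L g) ∘L f ∘L g by rw [comp_assoc]]
  have h1 : ‖f ∘L g - (f ∘L g) ∘L (f ∘L g)‖ ≤ ‖c‖ := by
    rw [← key]
    calc ‖f ∘L c ∘L g‖ ≤ ‖f‖ * ‖c ∘L g‖ := opNorm_comp_le _ _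
      _ ≤ ‖f‖ * (‖c‖ * ‖g‖) := by
          exact mul_le_mul_of_nonneg_left (opNorm_comp_le _ _) (norm_nonneg f)
      _ ≤ 1 * (‖c‖ * 1) := by
          gcongr
      _ = ‖c‖ := by ring
  have h2 : ‖f ∘L g‖ - ‖(f ∘L g) ∘L (f ∘L g)‖ ≤ ‖f ∘L g - (f ∘L g) ∘L (f ∘L g)‖ :=
    norm_sub_norm_le _ _
  have h3 : ‖(f ∘L g) ∘L (f ∘L g)‖ ≤ ‖f ∘L g‖ ^ 2 := by
    calc ‖(f ∘L g) ∘L (f ∘L g)‖ ≤ ‖f ∘L g‖ * ‖f ∘L g‖ := opNorm_comp_le _ _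
      _ = ‖f ∘L g‖ ^ 2 := (sq _).symm
  linarith
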